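/- arXiv:1903.04140 — 4 statements merged into one kernel-verified Lean document; each statement's English description precedes it below -/
import Mathlib

section
/- For all w1, w2 ∈ ℌ, one has (x+y)w1 ◇ w2 = w1 ◇ (x+y)w2 = (x+y)(w1 ◇ w2). -/
open scoped BigOperators

noncomputable section

/-- `ℌ = ℚ⟨x,y⟩`, the free noncommutative polynomial ring in two indeterminates,
realized as the free `ℚ`-algebra on `Bool` (`false ↦ x`, `true ↦ y`). -/
abbrev H : Type := FreeAlgebra ℚ Bool

/-- The indeterminate `x`. -/
def Hx : H := FreeAlgebra.ι ℚ false

/-- The indeterminate `y`. -/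
def Hy : H := FreeAlgebra.ι ℚ true

/-- The multiple zeta value `ζ(k₁,…,k_r) = ∑_{0<n₁<⋯<n_r} 1/(n₁^{k₁}⋯n_r^{k_r})`. -/
def MZV (r : ℕ) (k : Fin r → ℕ) : ℝ :=
  ∑' n : {n : Fin r → ℕ // (∀ i, 0 < n i) ∧ StrictMono n},
    ∏ i, (1 : ℝ) / (n.1 i : ℝ) ^ (k i)

/-- `Z : yℌx → ℝ` is the `ℚ`-linear map with `Z(y x^{k₁-1} ⋯ y x^{k_r-1}) = ζ(k₁,…,k_r)`.
We encode it as a `ℚ`-linear map on all of `ℌ` whose values on the basis monomials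
`y x^{k₁-1} ⋯ y x^{k_r-1}` (with `k_r ≥ 2`) of `yℌx` are the multiple zeta values;
these values determine `Z` uniquely on the subspace `yℌx`. -/
def IsZetaMap (Z : H →ₗ[ℚ] ℝ) : Prop :=
  ∀ (r : ℕ) (k : Fin (r + 1) → ℕ), (∀ i, 1 ≤ k i) → 2 ≤ k (Fin.last r) →
    Z ((List.ofFn fun i => Hy * Hx ^ (k i - 1)).prod) = MZV (r + 1) k

/-- The family `f(A,B) = (Z(A(x+y)^s B))_{s ≥ 0}`. -/
def fam (Z : H →ₗ[ℚ] ℝ) (A B : H) : ℕ → ℝ := fun s => Z (A * (Hx + Hy) ^ s * B)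

/-- The `ℚ`-bilinear product `◇` on `ℌ`, characterized by its recursive defining
properties (which determine it uniquely). -/
def IsDiamond (d : H →ₗ[ℚ] H →ₗ[ℚ] H) : Prop :=
  (∀ w, d w 1 = w) ∧ (∀ w, d 1 w = w) ∧
  (∀ w1 w2, d (Hx * w1) (Hx * w2) = Hx * d w1 (Hx * w2) - Hx * d (Hy * w1) w2) ∧
  (∀ w1 w2, d (Hx * w1) (Hy * w2) = Hx * d w1 (Hy * w2) + Hy * d (Hx * w1) w2) ∧
  (∀ w1 w2, d (Hy * w1) (Hx * w2) = Hy * d w1 (Hx * w2) + Hx * d (Hy * w1) w2) ∧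
  (∀ w1 w2, d (Hy * w1) (Hy * w2) = Hy * d w1 (Hy * w2) - Hy * d (Hx * w1) w2)

/-- The harmonic product `∗` on `ℌ`, characterized by its recursive defining
properties (which determine it uniquely). -/
def IsHarmonic (st : H →ₗ[ℚ] H →ₗ[ℚ] H) : Prop :=
  (∀ w, st w 1 = w) ∧ (∀ w, st 1 w = w) ∧
  (∀ w1 w2, st (Hx * w1) w2 = Hx * st w1 w2) ∧
  (∀ w1 w2, st w1 (Hx * w2) = Hx * st w1 w2) ∧
  (∀ w1 w2, st (Hy * w1) (Hy * w2) = Hy * (st w1 (Hy * w2) + st (Hy * w1) w2 + Hx * st w1 w2))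

/-- The anti-automorphism `τ` of `ℌ` interchanging `x` and `y`, characterized by
being `ℚ`-linear, anti-multiplicative, unital, and swapping the generators. -/
def IsTau (t : H →ₗ[ℚ] H) : Prop :=
  t 1 = 1 ∧ (∀ a b, t (a * b) = t b * t a) ∧ t Hx = Hy ∧ t Hy = Hx

/-- The automorphism `φ` of `ℌ` with `φ(x) = x + y` and `φ(y) = -y`. -/
def phi : H →ₐ[ℚ] H := FreeAlgebra.lift ℚ (fun b => if b then -Hy else Hx + Hy)

/-- The automorphism `S₁` of `ℌ` with `S₁(x) = x` and `S₁(y) = x + y`. -/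
def S1 : H →ₐ[ℚ] H := FreeAlgebra.lift ℚ (fun b => if b then Hx + Hy else Hx)

/-- The Dirichlet series `∑_{n ≥ 1} a_n / n^s` (with `a n` the coefficient indexed by
`n + 1`) converges to `L` at `s`, i.e. its partial sums tend to `L`. -/
def DSConv (a : ℕ → ℝ) (s : ℕ) (L : ℝ) : Prop :=
  Filter.Tendsto (fun N => ∑ n ∈ Finset.range N, a n / ((n : ℝ) + 1) ^ s)
    Filter.atTop (nhds L)


namespace Statement5Aux

/-- Monomials of `H` indexed by words. -/
def mono (l : List Bool) : H := (l.map (FreeAlgebra.ι ℚ)).prod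

open scoped Pointwise

def S : Set H := {w : H | ∃ l : List Bool, w = mono l}

lemma S_mul_S : S * S ⊆ S := by
  rintro _ ⟨a, ⟨la, rfl⟩, b, ⟨lb, rfl⟩, rfl⟩
  exact ⟨la ++ lb, by simp [mono]⟩

lemma span_S_top : Submodule.span ℚ S = ⊤ := by
  rw [Submodule.eq_top_iff']
  intro w
  induction w using FreeAlgebra.induction with
  | grade0 r =>
    have h1 : (1 : H) ∈ S := ⟨[], by simp [mono]⟩
    have : (algebraMap ℚ H) r = r • (1 : H) := by
      simp [Algebra.smul_def]
    rw [this]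
    exact Submodule.smul_mem _ _ (Submodule.subset_span h1)
  | grade1 b => exact Submodule.subset_span ⟨[b], by simp [mono]⟩
  | add a b ha hb => exact Submodule.add_mem _ ha hb
  | mul a b ha hb =>
    have : a * b ∈ Submodule.span ℚ S * Submodule.span ℚ S :=
      Submodule.mul_mem_mul ha hb
    rw [Submodule.span_mul_span] at this
    exact Submodule.span_le.mpr
      (fun z hz => Submodule.subset_span (S_mul_S hz)) this

/-- Part A: `(x+y)w₁ ◇ w₂ = (x+y)(w₁ ◇ w₂)`. -/
lemma partA (d : H →ₗ[ℚ] H →ₗ[ℚ] H) (hd : IsDiamond d) (w1 w2 : H) :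
    d ((Hx + Hy) * w1) w2 = (Hx + Hy) * d w1 w2 := by
  obtain ⟨h1, h2, hxx, hxy, hyx, hyy⟩ := hd
  -- linear in w2, check on monomials
  have key : ∀ l : List Bool, ∀ w1, d ((Hx + Hy) * w1) (mono l)
      = (Hx + Hy) * d w1 (mono l) := by
    intro l
    cases l with
    | nil =>
      intro w1
      simp only [mono, List.map_nil, List.prod_nil, h1]
    | cons b t =>
      intro w1
      have hm : mono (b :: t) = FreeAlgebra.ι ℚ b * mono t := by
        simp [mono]
      cases b with
      | false =>
        rw [hm]
        show d ((Hx + Hy) * w1) (Hx * mono t) = (Hx + Hy) * d w1 (Hx * mono t)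
        rw [add_mul, map_add, LinearMap.add_apply, hxx, hyx, add_mul]
        abel
      | true =>
        rw [hm]
        show d ((Hx + Hy) * w1) (Hy * mono t) = (Hx + Hy) * d w1 (Hy * mono t)
        rw [add_mul, map_add, LinearMap.add_apply, hxy, hyy, add_mul]
        abel
  have hw2 : w2 ∈ Submodule.span ℚ S := by rw [span_S_top]; trivial
  induction hw2 using Submodule.span_induction with
  | mem z hz => obtain ⟨l, rfl⟩ := hz; exact key l w1
  | zero => simp
  | add a b _ _ ha hb => simp only [map_add, ha, hb, mul_add]
  | smul c a _ ha => simp only [map_smul, ha, mul_smul_comm]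

/-- Part B on monomials, by induction on the word. -/
lemma partB_mono (d : H →ₗ[ℚ] H →ₗ[ℚ] H) (hd : IsDiamond d) (l : List Bool) :
    ∀ w2, d (mono l) ((Hx + Hy) * w2) = (Hx + Hy) * d (mono l) w2 := by
  obtain ⟨h1, h2, hxx, hxy, hyx, hyy⟩ := hd
  induction l with
  | nil => intro w2; simp [mono, h2]
  | cons b t ih =>
    intro w2
    have hm : mono (b :: t) = FreeAlgebra.ι ℚ b * mono t := by simp [mono]
    have hsum : d (Hx * mono t) w2 + d (Hy * mono t) w2
        = (Hx + Hy) * d (mono t) w2 := by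
      rw [← LinearMap.add_apply, ← map_add, ← add_mul]
      exact partA d ⟨h1, h2, hxx, hxy, hyx, hyy⟩ (mono t) w2
    cases b with
    | false =>
      rw [hm]
      show d (Hx * mono t) ((Hx + Hy) * w2) = (Hx + Hy) * d (Hx * mono t) w2
      rw [add_mul, map_add, hxx, hxy, add_mul]
      have : Hx * d (mono t) (Hx * w2) + Hx * d (mono t) (Hy * w2)
          = Hx * ((Hx + Hy) * d (mono t) w2) := by
        rw [← mul_add, ← map_add, ← add_mul, ih]
      have hgoal : Hx * d (mono t) (Hx * w2) - Hx * d (Hy * mono t) w2 +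
          (Hx * d (mono t) (Hy * w2) + Hy * d (Hx * mono t) w2)
          = Hx * ((Hx + Hy) * d (mono t) w2) - Hx * d (Hy * mono t) w2
            + Hy * d (Hx * mono t) w2 := by
        rw [← this]; abel
      rw [hgoal, ← hsum, mul_add]
      abel
    | true =>
      rw [hm]
      show d (Hy * mono t) ((Hx + Hy) * w2) = (Hx + Hy) * d (Hy * mono t) w2
      rw [add_mul, map_add, hyx, hyy, add_mul]
      have : Hy * d (mono t) (Hx * w2) + Hy * d (mono t) (Hy * w2)
          = Hy * ((Hx + Hy) * d (mono t) w2) := by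
        rw [← mul_add, ← map_add, ← add_mul, ih]
      have hgoal : Hy * d (mono t) (Hx * w2) + Hx * d (Hy * mono t) w2 +
          (Hy * d (mono t) (Hy * w2) - Hy * d (Hx * mono t) w2)
          = Hy * ((Hx + Hy) * d (mono t) w2) + Hx * d (Hy * mono t) w2
            - Hy * d (Hx * mono t) w2 := by
        rw [← this]; abel
      rw [hgoal, ← hsum, mul_add]
      abel

lemma partB (d : H →ₗ[ℚ] H →ₗ[ℚ] H) (hd : IsDiamond d) (w1 w2 : H) :
    d w1 ((Hx + Hy) * w2) = (Hx + Hy) * d w1 w2 := by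
  have hw1 : w1 ∈ Submodule.span ℚ S := by rw [span_S_top]; trivial
  induction hw1 using Submodule.span_induction with
  | mem z hz => obtain ⟨l, rfl⟩ := hz; exact partB_mono d hd l w2
  | zero => simp
  | add a b _ _ ha hb =>
    simp only [map_add, LinearMap.add_apply, ha, hb, mul_add]
  | smul c a _ ha =>
    simp only [map_smul, LinearMap.smul_apply, ha, mul_smul_comm]

end Statement5Aux

/-- For all `w₁, w₂ ∈ ℌ`,
`(x+y)w₁ ◇ w₂ = w₁ ◇ (x+y)w₂ = (x+y)(w₁ ◇ w₂)`. -/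
theorem statement5 (d : H →ₗ[ℚ] H →ₗ[ℚ] H) (hd : IsDiamond d) (w1 w2 : H) :
    d ((Hx + Hy) * w1) w2 = d w1 ((Hx + Hy) * w2) ∧
    d ((Hx + Hy) * w1) w2 = (Hx + Hy) * d w1 w2 := by
  have hA := Statement5Aux.partA d hd w1 w2
  have hB := Statement5Aux.partB d hd w1 w2
  exact ⟨hA.trans hB.symm, hA⟩

end
end

section
/- For all w1, w2 ∈ ℌ, one has φ(w1 ∗ w2) = φ(w1) ◇ φ(w2). -/
open scoped BigOperators

noncomputable section

section Aux6

private def mono (l : List Bool) : H := (l.map (FreeAlgebra.ι ℚ)).prod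

private lemma mono_nil : mono [] = 1 := rfl

private lemma mono_cons (b : Bool) (l : List Bool) :
    mono (b :: l) = FreeAlgebra.ι ℚ b * mono l := by simp [mono]

private lemma mono_cons_false (l : List Bool) : mono (false :: l) = Hx * mono l :=
  mono_cons false l

private lemma mono_cons_true (l : List Bool) : mono (true :: l) = Hy * mono l :=
  mono_cons true l

private lemma span_mono : Submodule.span ℚ {w : H | ∃ l : List Bool, mono l = w} = ⊤ := by
  rw [eq_top_iff]
  have h1 : (Submonoid.closure (Set.range (FreeAlgebra.ι ℚ : Bool → H)) : Set H)
      ⊆ {w : H | ∃ l : List Bool, mono l = w} := by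
    intro w hw
    induction hw using Submonoid.closure_induction with
    | mem x hx => obtain ⟨b, rfl⟩ := hx; exact ⟨[b], by simp [mono]⟩
    | one => exact ⟨[], rfl⟩
    | mul x y _ _ hx hy =>
      obtain ⟨l1, rfl⟩ := hx; obtain ⟨l2, rfl⟩ := hy
      exact ⟨l1 ++ l2, by simp [mono]⟩
  calc (⊤ : Submodule ℚ H) = Subalgebra.toSubmodule (Algebra.adjoin ℚ
        (Set.range (FreeAlgebra.ι ℚ : Bool → H))) := by
        rw [FreeAlgebra.adjoin_range_ι]; rfl
    _ = Submodule.span ℚ (Submonoid.closure (Set.range (FreeAlgebra.ι ℚ : Bool → H))) :=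
        Algebra.adjoin_eq_span ℚ (Set.range (FreeAlgebra.ι ℚ : Bool → H))
    _ ≤ Submodule.span ℚ {w : H | ∃ l : List Bool, mono l = w} := Submodule.span_mono h1

private lemma phi_x : phi Hx = Hx + Hy := by
  simp [phi, Hx, FreeAlgebra.lift_ι_apply]

private lemma phi_y : phi Hy = -Hy := by
  simp [phi, Hy, FreeAlgebra.lift_ι_apply]

private lemma phi_x_mul (w : H) : phi (Hx * w) = (Hx + Hy) * phi w := by
  rw [map_mul, phi_x]

private lemma phi_y_mul (w : H) : phi (Hy * w) = -(Hy * phi w) := by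
  rw [map_mul, phi_y, neg_mul]

variable {d : H →ₗ[ℚ] H →ₗ[ℚ] H}

private lemma d_add_left (u v w : H) : d (u + v) w = d u w + d v w := by
  rw [map_add, LinearMap.add_apply]

private lemma d_neg_left (u w : H) : d (-u) w = -(d u w) := by
  rw [map_neg, LinearMap.neg_apply]

/-- Lemma A: `d ((x+y)a) b = (x+y) d a b`. -/
private lemma dA (hd : IsDiamond d) (a b : H) :
    d ((Hx + Hy) * a) b = (Hx + Hy) * d a b := by
  obtain ⟨h1, h2, hxx, hxy, hyx, hyy⟩ := hd
  have hb : b ∈ Submodule.span ℚ {w : H | ∃ l : List Bool, mono l = w} := by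
    rw [span_mono]; trivial
  induction hb using Submodule.span_induction with
  | mem w hw =>
    obtain ⟨l, rfl⟩ := hw
    rw [add_mul, d_add_left]
    cases l with
    | nil => rw [mono_nil, h1, h1, h1, add_mul]
    | cons b t =>
      rw [mono_cons]
      cases b with
      | false =>
        show d (Hx * a) (Hx * mono t) + d (Hy * a) (Hx * mono t) = _
        rw [hxx, hyx]; noncomm_ring
      | true =>
        show d (Hx * a) (Hy * mono t) + d (Hy * a) (Hy * mono t) = _
        rw [hxy, hyy]; noncomm_ring
  | zero => simp
  | add u v _ _ hu hv => rw [map_add, map_add, hu, hv, mul_add]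
  | smul q u _ hu => rw [map_smul, map_smul, hu, mul_smul_comm]

private lemma dA' (hd : IsDiamond d) (a b : H) :
    d (Hx * a) b + d (Hy * a) b = (Hx + Hy) * d a b := by
  rw [← d_add_left, ← add_mul, dA hd]

/-- Lemma B: `d a ((x+y)b) = (x+y) d a b`. -/
private lemma dB (hd : IsDiamond d) (a b : H) :
    d a ((Hx + Hy) * b) = (Hx + Hy) * d a b := by
  have ha : a ∈ Submodule.span ℚ {w : H | ∃ l : List Bool, mono l = w} := by
    rw [span_mono]; trivial
  induction ha using Submodule.span_induction generalizing b with
  | mem w hw =>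
    obtain ⟨l, rfl⟩ := hw
    induction l generalizing b with
    | nil => rw [mono_nil, hd.2.1, hd.2.1]
    | cons c t ih =>
      obtain ⟨h1, h2, hxx, hxy, hyx, hyy⟩ := id hd
      have expand : ∀ w : H, d w ((Hx + Hy) * b) = d w (Hx * b) + d w (Hy * b) := by
        intro w; rw [add_mul, map_add]
      have hAB : d (mono t) (Hx * b) + d (mono t) (Hy * b) =
          d (Hx * mono t) b + d (Hy * mono t) b := by
        rw [← map_add, ← add_mul, ih b, ← dA' hd]
      rw [mono_cons]
      cases c with
      | false =>
        show d (Hx * mono t) ((Hx + Hy) * b) = (Hx + Hy) * d (Hx * mono t) b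
        rw [expand, hxx, hxy]
        calc Hx * d (mono t) (Hx * b) - Hx * d (Hy * mono t) b +
              (Hx * d (mono t) (Hy * b) + Hy * d (Hx * mono t) b)
            = Hx * (d (mono t) (Hx * b) + d (mono t) (Hy * b)) -
              Hx * d (Hy * mono t) b + Hy * d (Hx * mono t) b := by noncomm_ring
          _ = Hx * (d (Hx * mono t) b + d (Hy * mono t) b) -
              Hx * d (Hy * mono t) b + Hy * d (Hx * mono t) b := by rw [hAB]
          _ = (Hx + Hy) * d (Hx * mono t) b := by noncomm_ring
      | true =>
        show d (Hy * mono t) ((Hx + Hy) * b) = (Hx + Hy) * d (Hy * mono t) b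
        rw [expand, hyx, hyy]
        calc Hy * d (mono t) (Hx * b) + Hx * d (Hy * mono t) b +
              (Hy * d (mono t) (Hy * b) - Hy * d (Hx * mono t) b)
            = Hy * (d (mono t) (Hx * b) + d (mono t) (Hy * b)) +
              Hx * d (Hy * mono t) b - Hy * d (Hx * mono t) b := by noncomm_ring
          _ = Hy * (d (Hx * mono t) b + d (Hy * mono t) b) +
              Hx * d (Hy * mono t) b - Hy * d (Hx * mono t) b := by rw [hAB]
          _ = (Hx + Hy) * d (Hy * mono t) b := by noncomm_ring
  | zero => simp
  | add u v _ _ hu hv =>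
    rw [map_add, LinearMap.add_apply, LinearMap.add_apply, hu, hv, mul_add]
  | smul q u _ hu =>
    rw [map_smul, LinearMap.smul_apply, LinearMap.smul_apply, hu, mul_smul_comm]

private lemma core (st : H →ₗ[ℚ] H →ₗ[ℚ] H) (hst : IsHarmonic st)
    (hd : IsDiamond d) :
    ∀ (n : ℕ) (l1 l2 : List Bool), l1.length + l2.length ≤ n →
      phi (st (mono l1) (mono l2)) = d (phi (mono l1)) (phi (mono l2)) := by
  intro n
  induction n with
  | zero =>
    intro l1 l2 hlen
    have h1 : l1 = [] := by
      cases l1 with | nil => rfl | cons a t => simp at hlen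
    have h2 : l2 = [] := by
      subst h1
      cases l2 with | nil => rfl | cons a t => simp at hlen
    subst h2
    rw [mono_nil, hst.1, map_one, hd.1]
  | succ n IH =>
    intro l1 l2 hlen
    cases l1 with
    | nil => rw [mono_nil, hst.2.1, map_one, hd.2.1]
    | cons b1 t1 =>
      cases l2 with
      | nil => rw [mono_nil, hst.1, map_one, hd.1]
      | cons b2 t2 =>
        simp only [List.length_cons] at hlen
        cases b1 with
        | false =>
          rw [mono_cons_false]
          rw [hst.2.2.1, phi_x_mul, phi_x_mul, IH t1 (b2 :: t2) (by simp; omega), dA hd]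
        | true =>
          cases b2 with
          | false =>
            rw [mono_cons_false]
            rw [hst.2.2.2.1, phi_x_mul, phi_x_mul, IH (true :: t1) t2 (by simp; omega), dB hd]
          | true =>
            rw [mono_cons_true t1, mono_cons_true t2]
            have i1 : phi (st (mono t1) (Hy * mono t2)) =
                -(d (phi (mono t1)) (Hy * phi (mono t2))) := by
              have := IH t1 (true :: t2) (by simp; omega)
              rw [mono_cons_true t2] at this
              rw [this, phi_y_mul, map_neg]
            have i2 : phi (st (Hy * mono t1) (mono t2)) =
                -(d (Hy * phi (mono t1)) (phi (mono t2))) := by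
              have := IH (true :: t1) t2 (by simp; omega)
              rw [mono_cons_true t1] at this
              rw [this, phi_y_mul, d_neg_left]
            have i3 : phi (st (mono t1) (mono t2)) =
                d (phi (mono t1)) (phi (mono t2)) := IH t1 t2 (by omega)
            rw [hst.2.2.2.2, phi_y_mul, map_add, map_add, phi_x_mul, i1, i2, i3,
              phi_y_mul (mono t1), phi_y_mul (mono t2), d_neg_left, map_neg, neg_neg,
              hd.2.2.2.2.2]
            set a := phi (mono t1)
            set b := phi (mono t2)
            have hA := dA' hd a b
            calc -(Hy * (-(d a (Hy * b)) + -(d (Hy * a) b) + (Hx + Hy) * d a b))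
                = Hy * d a (Hy * b) -
                  (Hy * ((Hx + Hy) * d a b) - Hy * d (Hy * a) b) := by noncomm_ring
              _ = Hy * d a (Hy * b) -
                  (Hy * (d (Hx * a) b + d (Hy * a) b) - Hy * d (Hy * a) b) := by rw [hA]
              _ = Hy * d a (Hy * b) - Hy * d (Hx * a) b := by noncomm_ring

end Aux6

/-- For all `w₁, w₂ ∈ ℌ`, `φ(w₁ ∗ w₂) = φ(w₁) ◇ φ(w₂)`. -/
theorem statement6 (st : H →ₗ[ℚ] H →ₗ[ℚ] H) (hst : IsHarmonic st)
    (d : H →ₗ[ℚ] H →ₗ[ℚ] H) (hd : IsDiamond d) (w1 w2 : H) :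
    phi (st w1 w2) = d (phi w1) (phi w2) := by
  have h1 : w1 ∈ Submodule.span ℚ {w : H | ∃ l : List Bool, mono l = w} := by
    rw [span_mono]; trivial
  have h2 : w2 ∈ Submodule.span ℚ {w : H | ∃ l : List Bool, mono l = w} := by
    rw [span_mono]; trivial
  induction h1, h2 using Submodule.span_induction₂ with
  | mem_mem u v hu hv =>
    obtain ⟨l1, rfl⟩ := hu; obtain ⟨l2, rfl⟩ := hv
    exact core st hst hd (l1.length + l2.length) l1 l2 le_rfl
  | zero_left v hv => simp
  | zero_right u hu => simp
  | add_left u v w _ _ _ hu hv =>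
    simp only [map_add, LinearMap.add_apply, hu, hv]
  | add_right u v w _ _ _ hu hv =>
    simp only [map_add, hu, hv]
  | smul_left q u v _ _ hu =>
    simp only [map_smul, LinearMap.smul_apply, hu]
  | smul_right q u v _ _ hu =>
    simp only [map_smul, hu]

end
end

section
/- The product ◇ on ℌ is associative and commutative: for all w1, w2, w3 ∈ ℌ, (w1 ◇ w2) ◇ w3 = w1 ◇ (w2 ◇ w3) and w1 ◇ w2 = w2 ◇ w1. -/
open scoped BigOperators

noncomputable section

namespace Dia

/-- monomials in the alphabet `z = x+y`, `y`. -/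
def mono2 : List Bool → H
  | [] => 1
  | b :: l => (if b then Hy else Hx + Hy) * mono2 l

@[simp] lemma mono2_nil : mono2 [] = 1 := rfl
@[simp] lemma mono2_true (l : List Bool) : mono2 (true :: l) = Hy * mono2 l := rfl
@[simp] lemma mono2_false (l : List Bool) : mono2 (false :: l) = (Hx + Hy) * mono2 l := rfl

lemma mono2_append (l l' : List Bool) : mono2 (l ++ l') = mono2 l * mono2 l' := by
  induction l with
  | nil => simp
  | cons b l ih => cases b <;> simp [ih, mul_assoc]

lemma span_mono2 : Submodule.span ℚ (Set.range mono2) = ⊤ := by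
  set N := Submodule.span ℚ (Set.range mono2) with hN
  have hmem : ∀ l, mono2 l ∈ N := fun l => Submodule.subset_span ⟨l, rfl⟩
  have hmul1 : ∀ (l : List Bool) (b : H), b ∈ N → mono2 l * b ∈ N := by
    intro l b hb
    induction hb using Submodule.span_induction with
    | mem c hc => obtain ⟨l', rfl⟩ := hc; rw [← mono2_append]; exact hmem _
    | zero => simpa using N.zero_mem
    | add u v hu hv hu' hv' => rw [mul_add]; exact N.add_mem hu' hv'
    | smul r u hu hu' => rw [mul_smul_comm]; exact N.smul_mem r hu'
  have hmul : ∀ a ∈ N, ∀ b ∈ N, a * b ∈ N := by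
    intro a ha
    induction ha using Submodule.span_induction with
    | mem c hc => obtain ⟨l, rfl⟩ := hc; intro b hb; exact hmul1 l b hb
    | zero => intro b hb; simpa using N.zero_mem
    | add u v hu hv hu' hv' => intro b hb; rw [add_mul]; exact N.add_mem (hu' b hb) (hv' b hb)
    | smul r u hu hu' => intro b hb; rw [smul_mul_assoc]; exact N.smul_mem r (hu' b hb)
  rw [eq_top_iff]
  intro w hw
  clear hw hN
  show w ∈ N
  induction w using FreeAlgebra.induction with
  | grade0 r =>
      have : (algebraMap ℚ H r) = r • mono2 [] := by simp [Algebra.algebraMap_eq_smul_one]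
      rw [this]; exact N.smul_mem r (hmem [])
  | grade1 b =>
      cases b
      · have : FreeAlgebra.ι ℚ false = mono2 [false] - mono2 [true] := by
          simp [Hx, Hy]
        rw [this]; exact N.sub_mem (hmem _) (hmem _)
      · have : FreeAlgebra.ι ℚ true = mono2 [true] := by simp [Hy]
        rw [this]; exact hmem [true]
  | mul a b ha hb => exact hmul a ha b hb
  | add a b ha hb => exact N.add_mem ha hb

/-- linear-predicate extension principle -/
lemma extend (p : H → Prop) (h0 : p 0) (hadd : ∀ a b, p a → p b → p (a + b))
    (hsmul : ∀ (r : ℚ) a, p a → p (r • a)) (hm : ∀ l, p (mono2 l)) : ∀ w, p w := by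
  intro w
  have hw : w ∈ Submodule.span ℚ (Set.range mono2) := by rw [span_mono2]; trivial
  induction hw using Submodule.span_induction with
  | mem c hc => obtain ⟨l, rfl⟩ := hc; exact hm l
  | zero => exact h0
  | add u v _ _ hu hv => exact hadd u v hu hv
  | smul r u _ hu => exact hsmul r u hu

end Dia

namespace Dia

variable (d : H →ₗ[ℚ] H →ₗ[ℚ] H)

lemma R1 (hd : IsDiamond d) :
    ∀ A B, d ((Hx + Hy) * A) B = (Hx + Hy) * d A B := by
  obtain ⟨h1, h2, hxx, hxy, hyx, hyy⟩ := hd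
  intro A
  refine extend _ ?_ ?_ ?_ ?_
  · simp
  · intro a b ha hb; simp only [map_add, ha, hb, mul_add]
  · intro r a ha; simp only [map_smul, ha, mul_smul_comm]
  · intro l
    match l with
    | [] => simp [h1]
    | true :: l =>
        rw [mono2_true, add_mul Hx Hy A]
        simp only [map_add, LinearMap.add_apply]
        rw [hxy, hyy]; noncomm_ring
    | false :: l =>
        rw [mono2_false, add_mul Hx Hy A, add_mul Hx Hy (mono2 l)]
        simp only [map_add, LinearMap.add_apply]
        rw [hxx, hxy, hyx, hyy]; noncomm_ring

lemma xsplit (hd : IsDiamond d) (A B : H) :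
    d (Hx * A) B = (Hx + Hy) * d A B - d (Hy * A) B := by
  have h := R1 d hd A B
  rw [add_mul Hx Hy A] at h
  simp only [map_add, LinearMap.add_apply] at h
  exact eq_sub_of_add_eq h

lemma R2 (hd : IsDiamond d) :
    ∀ A B, d A ((Hx + Hy) * B) = (Hx + Hy) * d A B := by
  obtain ⟨h1, h2, hxx, hxy, hyx, hyy⟩ := hd
  have key : ∀ (l : List Bool) (B : H),
      d (mono2 l) ((Hx + Hy) * B) = (Hx + Hy) * d (mono2 l) B := by
    intro l
    induction l with
    | nil => intro B; simp [h2]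
    | cons b l ih =>
        intro B
        cases b
        · rw [mono2_false, R1 d ⟨h1, h2, hxx, hxy, hyx, hyy⟩, ih,
            R1 d ⟨h1, h2, hxx, hxy, hyx, hyy⟩]
        · rw [mono2_true, add_mul Hx Hy B]
          simp only [map_add]
          rw [hyx, hyy]
          have e2 := xsplit d ⟨h1, h2, hxx, hxy, hyx, hyy⟩ (mono2 l) B
          have e1 : d (mono2 l) (Hx * B) =
              (Hx + Hy) * d (mono2 l) B - d (mono2 l) (Hy * B) := by
            have h := ih B
            rw [add_mul Hx Hy B] at h
            simp only [map_add] at h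
            exact eq_sub_of_add_eq h
          rw [e1, e2]; noncomm_ring
  intro A B
  refine extend (fun A => d A ((Hx + Hy) * B) = (Hx + Hy) * d A B) ?_ ?_ ?_ (fun l => key l B) A
  · simp
  · intro a b ha hb
    simp only [map_add, LinearMap.add_apply, ha, hb, mul_add]
  · intro r a ha
    simp only [map_smul, LinearMap.smul_apply, ha, mul_smul_comm]

lemma R3 (hd : IsDiamond d) (A B : H) :
    d (Hy * A) (Hy * B) =
      Hy * d A (Hy * B) + Hy * d (Hy * A) B - Hy * ((Hx + Hy) * d A B) := by
  rw [hd.2.2.2.2.2, xsplit d hd]; noncomm_ring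

end Dia

namespace Dia

variable (d : H →ₗ[ℚ] H →ₗ[ℚ] H)

lemma monster (hd : IsDiamond d) (A B C : H)
    (I1 : d (d A (Hy * B)) (Hy * C) = d A (d (Hy * B) (Hy * C)))
    (I2 : d (d (Hy * A) B) (Hy * C) = d (Hy * A) (d B (Hy * C)))
    (I4 : d (d A (Hy * B)) C = d A (d (Hy * B) C))
    (I5 : d (d (Hy * A) (Hy * B)) C = d (Hy * A) (d (Hy * B) C))
    (I6 : d (d (Hy * A) B) C = d (Hy * A) (d B C))
    (I7 : d (d A B) (Hy * C) = d A (d B (Hy * C)))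
    (I8 : d (d A B) C = d A (d B C)) :
    d (d (Hy * A) (Hy * B)) (Hy * C) = d (Hy * A) (d (Hy * B) (Hy * C)) := by
  have hq : d (Hy * A) (d (Hy * B) C) =
      d (Hy * d A (Hy * B)) C + d (Hy * d (Hy * A) B) C
        - d (Hy * ((Hx + Hy) * d A B)) C := by
    rw [← I5, R3 d hd A B]
    simp only [map_add, map_sub, LinearMap.add_apply, LinearMap.sub_apply]
  rw [R3 d hd A B, R3 d hd B C]
  simp only [map_add, map_sub, LinearMap.add_apply, LinearMap.sub_apply]
  rw [R3 d hd (d A (Hy * B)) C, R3 d hd (d (Hy * A) B) C,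
    R3 d hd ((Hx + Hy) * d A B) C,
    R3 d hd A (d B (Hy * C)), R3 d hd A (d (Hy * B) C),
    R3 d hd A ((Hx + Hy) * d B C)]
  rw [R1 d hd (d A B) (Hy * C), R1 d hd (d A B) C,
    R2 d hd (Hy * A) (d B C), R2 d hd A (d B C)]
  rw [I1, R3 d hd B C]
  simp only [map_add, map_sub]
  rw [I2, I4, I6, I7, I8, hq]
  noncomm_ring

lemma assocM (hd : IsDiamond d) : ∀ n l1 l2 l3 : _, l1.length + l2.length + l3.length ≤ n →
    d (d (mono2 l1) (mono2 l2)) (mono2 l3)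
      = d (mono2 l1) (d (mono2 l2) (mono2 l3)) := by
  intro n
  induction n using Nat.strong_induction_on with
  | _ n ih =>
  intro l1 l2 l3 h
  match l1, l2, l3 with
  | [], l2, l3 => simp only [mono2_nil, hd.2.1]
  | l1, [], l3 => simp only [mono2_nil, hd.1, hd.2.1]
  | l1, l2, [] => simp only [mono2_nil, hd.1]
  | false :: t1, l2, l3 =>
      have hi : d (d (mono2 t1) (mono2 l2)) (mono2 l3)
          = d (mono2 t1) (d (mono2 l2) (mono2 l3)) := by
        refine ih (n - 1) (by simp only [List.length_cons] at h; omega) _ _ _ ?_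
        simp only [List.length_cons] at h ⊢; omega
      simp only [mono2_false]
      rw [R1 d hd (mono2 t1) (mono2 l2),
        R1 d hd (d (mono2 t1) (mono2 l2)) (mono2 l3), hi,
        R1 d hd (mono2 t1) (d (mono2 l2) (mono2 l3))]
  | true :: t1, false :: t2, l3 =>
      have hi : d (d (mono2 (true :: t1)) (mono2 t2)) (mono2 l3)
          = d (mono2 (true :: t1)) (d (mono2 t2) (mono2 l3)) := by
        refine ih (n - 1) (by simp only [List.length_cons] at h; omega) _ _ _ ?_
        simp only [List.length_cons] at h ⊢; omega
      simp only [mono2_true] at hi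
      simp only [mono2_true, mono2_false]
      rw [R2 d hd (Hy * mono2 t1) (mono2 t2),
        R1 d hd (d (Hy * mono2 t1) (mono2 t2)) (mono2 l3), hi,
        R1 d hd (mono2 t2) (mono2 l3),
        R2 d hd (Hy * mono2 t1) (d (mono2 t2) (mono2 l3))]
  | true :: t1, true :: t2, false :: t3 =>
      have hi : d (d (mono2 (true :: t1)) (mono2 (true :: t2))) (mono2 t3)
          = d (mono2 (true :: t1)) (d (mono2 (true :: t2)) (mono2 t3)) := by
        refine ih (n - 1) (by simp only [List.length_cons] at h; omega) _ _ _ ?_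
        simp only [List.length_cons] at h ⊢; omega
      simp only [mono2_true] at hi
      simp only [mono2_true, mono2_false]
      rw [R2 d hd (d (Hy * mono2 t1) (Hy * mono2 t2)) (mono2 t3), hi,
        R2 d hd (Hy * mono2 t2) (mono2 t3),
        R2 d hd (Hy * mono2 t1) (d (Hy * mono2 t2) (mono2 t3))]
  | true :: t1, true :: t2, true :: t3 =>
      have IH : ∀ l1' l2' l3' : List Bool,
          l1'.length + l2'.length + l3'.length + 1 ≤ n →
          d (d (mono2 l1') (mono2 l2')) (mono2 l3')
            = d (mono2 l1') (d (mono2 l2') (mono2 l3')) := by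
        intro a b c hh
        refine ih (n - 1) ?_ _ _ _ ?_ <;>
          · simp only [List.length_cons] at h; omega
      have I1 := IH t1 (true :: t2) (true :: t3)
        (by simp only [List.length_cons] at h ⊢; omega)
      have I2 := IH (true :: t1) t2 (true :: t3)
        (by simp only [List.length_cons] at h ⊢; omega)
      have I4 := IH t1 (true :: t2) t3
        (by simp only [List.length_cons] at h ⊢; omega)
      have I5 := IH (true :: t1) (true :: t2) t3
        (by simp only [List.length_cons] at h ⊢; omega)
      have I6 := IH (true :: t1) t2 t3
        (by simp only [List.length_cons] at h ⊢; omega)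
      have I7 := IH t1 t2 (true :: t3)
        (by simp only [List.length_cons] at h ⊢; omega)
      have I8 := IH t1 t2 t3
        (by simp only [List.length_cons] at h ⊢; omega)
      simp only [mono2_true] at I1 I2 I4 I5 I6 I7 I8 ⊢
      exact monster d hd _ _ _ I1 I2 I4 I5 I6 I7 I8

end Dia

namespace Dia

variable (d : H →ₗ[ℚ] H →ₗ[ℚ] H)

lemma commM (hd : IsDiamond d) : ∀ n l1 l2 : _, l1.length + l2.length ≤ n →
    d (mono2 l1) (mono2 l2) = d (mono2 l2) (mono2 l1) := by
  intro n
  induction n using Nat.strong_induction_on with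
  | _ n ih =>
  intro l1 l2 h
  match l1, l2 with
  | [], l2 => simp only [mono2_nil, hd.1, hd.2.1]
  | l1, [] => simp only [mono2_nil, hd.1, hd.2.1]
  | false :: t1, l2 =>
      have hi : d (mono2 t1) (mono2 l2) = d (mono2 l2) (mono2 t1) := by
        refine ih (n - 1) (by simp only [List.length_cons] at h; omega) _ _ ?_
        simp only [List.length_cons] at h ⊢; omega
      simp only [mono2_false]
      rw [R1 d hd (mono2 t1) (mono2 l2), hi, R2 d hd (mono2 l2) (mono2 t1)]
  | true :: t1, false :: t2 =>
      have hi : d (mono2 (true :: t1)) (mono2 t2) = d (mono2 t2) (mono2 (true :: t1)) := by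
        refine ih (n - 1) (by simp only [List.length_cons] at h; omega) _ _ ?_
        simp only [List.length_cons] at h ⊢; omega
      simp only [mono2_true] at hi
      simp only [mono2_true, mono2_false]
      rw [R2 d hd (Hy * mono2 t1) (mono2 t2), hi, R1 d hd (mono2 t2) (Hy * mono2 t1)]
  | true :: t1, true :: t2 =>
      have IH : ∀ l1' l2' : List Bool, l1'.length + l2'.length + 1 ≤ n →
          d (mono2 l1') (mono2 l2') = d (mono2 l2') (mono2 l1') := by
        intro a b hh
        refine ih (n - 1) ?_ _ _ ?_ <;> · simp only [List.length_cons] at h ⊢; omega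
      have I1 := IH t1 (true :: t2) (by simp only [List.length_cons] at h ⊢; omega)
      have I2 := IH (true :: t1) t2 (by simp only [List.length_cons] at h ⊢; omega)
      have I3 := IH t1 t2 (by simp only [List.length_cons] at h ⊢; omega)
      simp only [mono2_true] at I1 I2 ⊢
      rw [R3 d hd (mono2 t1) (mono2 t2), R3 d hd (mono2 t2) (mono2 t1), I1, I2, I3]
      noncomm_ring

lemma comm_all (hd : IsDiamond d) : ∀ w1 w2 : H, d w1 w2 = d w2 w1 := by
  have step1 : ∀ (l1 : List Bool) (w2 : H), d (mono2 l1) w2 = d w2 (mono2 l1) := by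
    intro l1
    refine extend _ ?_ ?_ ?_ ?_
    · simp
    · intro a b ha hb
      simp only [map_add, LinearMap.add_apply, ha, hb]
    · intro r a ha
      simp only [map_smul, LinearMap.smul_apply, ha]
    · intro l2
      exact commM d hd (l1.length + l2.length) l1 l2 le_rfl
  intro w1 w2
  refine extend (fun w1 => d w1 w2 = d w2 w1) ?_ ?_ ?_ (fun l => step1 l w2) w1
  · simp
  · intro a b ha hb
    simp only [map_add, LinearMap.add_apply, ha, hb]
  · intro r a ha
    simp only [map_smul, LinearMap.smul_apply, ha]

lemma assoc_all (hd : IsDiamond d) : ∀ w1 w2 w3 : H,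
    d (d w1 w2) w3 = d w1 (d w2 w3) := by
  have step1 : ∀ (l1 l2 : List Bool) (w3 : H),
      d (d (mono2 l1) (mono2 l2)) w3 = d (mono2 l1) (d (mono2 l2) w3) := by
    intro l1 l2
    refine extend _ ?_ ?_ ?_ ?_
    · simp
    · intro a b ha hb
      simp only [map_add, ha, hb]
    · intro r a ha
      simp only [map_smul, ha]
    · intro l3
      exact assocM d hd (l1.length + l2.length + l3.length) l1 l2 l3 le_rfl
  have step2 : ∀ (l1 : List Bool) (w2 w3 : H),
      d (d (mono2 l1) w2) w3 = d (mono2 l1) (d w2 w3) := by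
    intro l1 w2 w3
    refine extend (fun w2 => d (d (mono2 l1) w2) w3 = d (mono2 l1) (d w2 w3)) ?_ ?_ ?_
      (fun l2 => step1 l1 l2 w3) w2
    · simp
    · intro a b ha hb
      simp only [map_add, LinearMap.add_apply, ha, hb]
    · intro r a ha
      simp only [map_smul, LinearMap.smul_apply, ha]
  intro w1 w2 w3
  refine extend (fun w1 => d (d w1 w2) w3 = d w1 (d w2 w3)) ?_ ?_ ?_
    (fun l1 => step2 l1 w2 w3) w1
  · simp
  · intro a b ha hb
    simp only [map_add, LinearMap.add_apply, ha, hb]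
  · intro r a ha
    simp only [map_smul, LinearMap.smul_apply, ha]

end Dia


/-- The product `◇` on `ℌ` is associative and commutative. -/
theorem statement7 (d : H →ₗ[ℚ] H →ₗ[ℚ] H) (hd : IsDiamond d) (w1 w2 w3 : H) :
    d (d w1 w2) w3 = d w1 (d w2 w3) ∧ d w1 w2 = d w2 w1 :=
  ⟨Dia.assoc_all d hd w1 w2 w3, Dia.comm_all d hd w1 w2⟩

end
end

section
/- Let (a_n)_{n≥1} and (b_n)_{n≥1} be real sequences such that the Dirichlet series L1(s) = ∑_{n≥1} a_n/n^s and L2(s) = ∑_{n≥1} b_n/n^s converge for every integer s ≥ 0 and L1(s) + s·L2(s) = 0 holds for every integer s ≥ 0. Then a_n = 0 and b_n = 0 for all n ≥ 1. -/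
open scoped BigOperators
open Filter Topology Finset

noncomputable section

-- terms of a convergent series tend to zero
lemma aux_term_tendsto_zero {f : ℕ → ℝ} {L : ℝ}
    (h : Tendsto (fun N => ∑ n ∈ Finset.range N, f n) atTop (𝓝 L)) :
    Tendsto f atTop (𝓝 0) := by
  have h2 : Tendsto (fun N => ∑ n ∈ Finset.range (N + 1), f n) atTop (𝓝 L) :=
    h.comp (tendsto_add_atTop_nat 1)
  have h3 := h2.sub h
  simp only [Finset.sum_range_succ, add_sub_cancel_left, sub_self] at h3
  exact h3

set_option maxHeartbeats 1000000 in
lemma aux_tail_bound (a : ℕ → ℝ) (n : ℕ) (L : ℕ → ℝ)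
    (hL : ∀ s, DSConv a s (L s)) (ih : ∀ k < n, a k = 0) :
    ∃ E : ℝ, 0 ≤ E ∧ ∀ s, 2 ≤ s →
      |((n : ℝ) + 1) ^ s * L s - a n| ≤ E * (((n : ℝ) + 1) / ((n : ℝ) + 2)) ^ s := by
  -- coefficients tend to 0, hence bounded
  have h0 : Tendsto (fun N => ∑ k ∈ Finset.range N, a k) atTop (𝓝 (L 0)) := by
    have := hL 0
    simpa [DSConv] using this
  have hterm : Tendsto a atTop (𝓝 0) := aux_term_tendsto_zero h0
  have habs : Tendsto (fun k => |a k|) atTop (𝓝 0) := by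
    simpa using hterm.abs
  obtain ⟨M, hM⟩ := habs.bddAbove_range
  have hMbd : ∀ k, |a k| ≤ M := fun k => hM ⟨k, rfl⟩
  have hM0 : 0 ≤ M := le_trans (abs_nonneg _) (hMbd 0)
  -- base summable series
  have S2 : Summable (fun k : ℕ => 1 / ((k : ℝ) + 1) ^ 2) := by
    have := (summable_nat_add_iff (f := fun k : ℕ => 1 / (k : ℝ) ^ 2) 1).mpr
      (Real.summable_one_div_nat_pow.mpr one_lt_two)
    simpa [Nat.cast_add] using this
  -- K
  have SK : Summable (fun k : ℕ => 1 / ((k : ℝ) + (n : ℝ) + 2) ^ 2) := by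
    refine Summable.of_nonneg_of_le (fun k => by positivity) (fun k => ?_) S2
    have hle : ((k : ℝ) + 1) ^ 2 ≤ ((k : ℝ) + (n : ℝ) + 2) ^ 2 := by
      have h1 : (0 : ℝ) ≤ (k : ℝ) + 1 := by positivity
      have h2 : (k : ℝ) + 1 ≤ (k : ℝ) + (n : ℝ) + 2 := by
        linarith [Nat.cast_nonneg (α := ℝ) n]
      exact pow_le_pow_left₀ h1 h2 2
    exact one_div_le_one_div_of_le (by positivity) hle
  set K : ℝ := ∑' k : ℕ, 1 / ((k : ℝ) + (n : ℝ) + 2) ^ 2 with hK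
  have hK0 : 0 ≤ K := tsum_nonneg (fun k => by positivity)
  -- summability at s ≥ 2
  have hsum : ∀ s : ℕ, 2 ≤ s → Summable (fun k : ℕ => ‖a k / ((k : ℝ) + 1) ^ s‖) := by
    intro s hs
    refine Summable.of_nonneg_of_le (fun k => norm_nonneg _) (fun k => ?_) (S2.mul_left M)
    have h1 : (1 : ℝ) ≤ (k : ℝ) + 1 := by linarith [Nat.cast_nonneg (α := ℝ) k]
    have hps : (0 : ℝ) < ((k : ℝ) + 1) ^ s := by positivity
    calc ‖a k / ((k : ℝ) + 1) ^ s‖ = |a k| / ((k : ℝ) + 1) ^ s := by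
          rw [Real.norm_eq_abs, abs_div, abs_of_pos hps]
      _ ≤ M / ((k : ℝ) + 1) ^ 2 := by
          apply div_le_div₀ hM0 (hMbd k) (by positivity)
          exact pow_le_pow_right₀ h1 hs
      _ = M * (1 / ((k : ℝ) + 1) ^ 2) := by ring
  refine ⟨M * K * ((n : ℝ) + 2) ^ 2, by positivity, fun s hs => ?_⟩
  have hsumN := hsum s hs
  have hsum' : Summable (fun k : ℕ => a k / ((k : ℝ) + 1) ^ s) := hsumN.of_norm
  -- identify L s with the tsum
  have hLs : L s = ∑' k : ℕ, a k / ((k : ℝ) + 1) ^ s :=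
    tendsto_nhds_unique (hL s) hsum'.hasSum.tendsto_sum_nat
  -- split off first n+1 terms
  have hsplit := Summable.sum_add_tsum_nat_add (f := fun k : ℕ => a k / ((k : ℝ) + 1) ^ s) (n + 1) hsum'
  have hhead : ∑ i ∈ Finset.range (n + 1), a i / ((i : ℝ) + 1) ^ s
      = a n / ((n : ℝ) + 1) ^ s := by
    rw [Finset.sum_range_succ]
    have : ∑ i ∈ Finset.range n, a i / ((i : ℝ) + 1) ^ s = 0 := by
      apply Finset.sum_eq_zero
      intro i hi
      rw [ih i (Finset.mem_range.mp hi), zero_div]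
    rw [this, zero_add]
  set R : ℝ := ∑' k : ℕ, a (k + (n + 1)) / (((k + (n + 1) : ℕ) : ℝ) + 1) ^ s with hR
  have hLs2 : L s = a n / ((n : ℝ) + 1) ^ s + R := by
    rw [hLs, ← hsplit, hhead]
  have hnp : (0 : ℝ) < ((n : ℝ) + 1) ^ s := by positivity
  have key : ((n : ℝ) + 1) ^ s * L s - a n = ((n : ℝ) + 1) ^ s * R := by
    rw [hLs2]; field_simp; ring
  rw [key]
  -- bound |R|
  have hsumN'' : Summable (fun k : ℕ => ‖a (k + (n + 1)) / (((k + (n + 1) : ℕ) : ℝ) + 1) ^ s‖) :=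
    (summable_nat_add_iff (n + 1)).mpr hsumN
  have termbd : ∀ k : ℕ, ‖a (k + (n + 1)) / (((k + (n + 1) : ℕ) : ℝ) + 1) ^ s‖
      ≤ (M / ((n : ℝ) + 2) ^ (s - 2)) * (1 / ((k : ℝ) + (n : ℝ) + 2) ^ 2) := by
    intro k
    have hcast : (((k + (n + 1) : ℕ) : ℝ) + 1) = (k : ℝ) + (n : ℝ) + 2 := by
      push_cast; ring
    set y : ℝ := (k : ℝ) + (n : ℝ) + 2 with hy
    have hy2 : (n : ℝ) + 2 ≤ y := by
      rw [hy]; linarith [Nat.cast_nonneg (α := ℝ) k]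
    have hyp : (0 : ℝ) < y := by positivity
    have hnp2 : (0 : ℝ) < (n : ℝ) + 2 := by positivity
    have hpow : ((n : ℝ) + 2) ^ (s - 2) * y ^ 2 ≤ y ^ s := by
      calc ((n : ℝ) + 2) ^ (s - 2) * y ^ 2 ≤ y ^ (s - 2) * y ^ 2 := by
            gcongr
        _ = y ^ s := by rw [← pow_add]; congr 1; omega
    have hps : (0 : ℝ) < y ^ s := by positivity
    have heq : (M / ((n : ℝ) + 2) ^ (s - 2)) * (1 / y ^ 2)
        = M / (((n : ℝ) + 2) ^ (s - 2) * y ^ 2) := by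
      rw [div_mul_div_comm, mul_one]
    rw [hcast, Real.norm_eq_abs, abs_div, abs_of_pos hps, heq]
    exact div_le_div₀ hM0 (hMbd _) (by positivity) hpow
  have hRbd : |R| ≤ (M / ((n : ℝ) + 2) ^ (s - 2)) * K := by
    calc |R| ≤ ∑' k : ℕ, ‖a (k + (n + 1)) / (((k + (n + 1) : ℕ) : ℝ) + 1) ^ s‖ := by
          rw [← Real.norm_eq_abs, hR]
          exact norm_tsum_le_tsum_norm hsumN''
      _ ≤ ∑' k : ℕ, (M / ((n : ℝ) + 2) ^ (s - 2)) * (1 / ((k : ℝ) + (n : ℝ) + 2) ^ 2) := by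
          apply Summable.tsum_le_tsum termbd hsumN'' ((SK).mul_left _)
      _ = (M / ((n : ℝ) + 2) ^ (s - 2)) * K := by rw [tsum_mul_left]
  have hfin : ((n : ℝ) + 1) ^ s * ((M / ((n : ℝ) + 2) ^ (s - 2)) * K)
      = M * K * ((n : ℝ) + 2) ^ 2 * (((n : ℝ) + 1) / ((n : ℝ) + 2)) ^ s := by
    have hnp2 : ((n : ℝ) + 2) ≠ 0 := by positivity
    rw [pow_sub₀ _ hnp2 hs, div_pow]
    field_simp
  calc |((n : ℝ) + 1) ^ s * R| = ((n : ℝ) + 1) ^ s * |R| := by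
        rw [abs_mul, abs_of_nonneg hnp.le]
    _ ≤ ((n : ℝ) + 1) ^ s * ((M / ((n : ℝ) + 2) ^ (s - 2)) * K) := by
        exact mul_le_mul_of_nonneg_left hRbd hnp.le
    _ = M * K * ((n : ℝ) + 2) ^ 2 * (((n : ℝ) + 1) / ((n : ℝ) + 2)) ^ s := hfin


/-- If the Dirichlet series `L₁(s) = ∑_{n≥1} a_n/n^s` and
`L₂(s) = ∑_{n≥1} b_n/n^s` converge for every integer `s ≥ 0` and
`L₁(s) + s·L₂(s) = 0` for every integer `s ≥ 0`, then all `a_n` and `b_n` vanish. -/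
theorem statement11 (a b : ℕ → ℝ)
    (h : ∀ s : ℕ, ∃ L1 L2 : ℝ,
      DSConv a s L1 ∧ DSConv b s L2 ∧ L1 + (s : ℝ) * L2 = 0) :
    ∀ n, a n = 0 ∧ b n = 0 := by
  choose L1 L2 h1 h2 h3 using h
  intro n
  induction n using Nat.strong_induction_on with
  | _ n IH =>
  have iha : ∀ k < n, a k = 0 := fun k hk => (IH k hk).1
  have ihb : ∀ k < n, b k = 0 := fun k hk => (IH k hk).2
  obtain ⟨Ea, hEa0, hEa⟩ := aux_tail_bound a n L1 h1 iha
  obtain ⟨Eb, hEb0, hEb⟩ := aux_tail_bound b n L2 h2 ihb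
  set q : ℝ := ((n : ℝ) + 1) / ((n : ℝ) + 2) with hqdef
  have hq0 : 0 ≤ q := by positivity
  have hq1 : q < 1 := by
    rw [hqdef, div_lt_one (by positivity)]; linarith
  have t1 : Filter.Tendsto (fun s : ℕ => ((n : ℝ) + 1) ^ s * L1 s)
      Filter.atTop (nhds (a n)) := by
    have hz : Filter.Tendsto (fun s : ℕ => ((n : ℝ) + 1) ^ s * L1 s - a n)
        Filter.atTop (nhds 0) := by
      have tq : Filter.Tendsto (fun s : ℕ => Ea * q ^ s) Filter.atTop (nhds 0) := by
        simpa using (tendsto_pow_atTop_nhds_zero_of_lt_one hq0 hq1).const_mul Ea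
      refine squeeze_zero_norm' ?_ tq
      filter_upwards [Filter.eventually_ge_atTop 2] with s hs
      simpa [Real.norm_eq_abs] using hEa s hs
    have := hz.add_const (a n)
    simpa using this
  have t2 : Filter.Tendsto (fun s : ℕ => ((n : ℝ) + 1) ^ s * L2 s)
      Filter.atTop (nhds (b n)) := by
    have hz : Filter.Tendsto (fun s : ℕ => ((n : ℝ) + 1) ^ s * L2 s - b n)
        Filter.atTop (nhds 0) := by
      have tq : Filter.Tendsto (fun s : ℕ => Eb * q ^ s) Filter.atTop (nhds 0) := by
        simpa using (tendsto_pow_atTop_nhds_zero_of_lt_one hq0 hq1).const_mul Eb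
      refine squeeze_zero_norm' ?_ tq
      filter_upwards [Filter.eventually_ge_atTop 2] with s hs
      simpa [Real.norm_eq_abs] using hEb s hs
    have := hz.add_const (b n)
    simpa using this
  have t3 : Filter.Tendsto (fun s : ℕ => (s : ℝ) * (((n : ℝ) + 1) ^ s * L2 s))
      Filter.atTop (nhds (-(a n))) := by
    have heq : (fun s : ℕ => (s : ℝ) * (((n : ℝ) + 1) ^ s * L2 s))
        = fun s : ℕ => -(((n : ℝ) + 1) ^ s * L1 s) := by
      funext s
      have h3s := h3 s
      have hL1 : L1 s = -((s : ℝ) * L2 s) := by linarith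
      rw [hL1]; ring
    rw [heq]
    exact t1.neg
  have t4 : Filter.Tendsto (fun s : ℕ => ((n : ℝ) + 1) ^ s * L2 s)
      Filter.atTop (nhds 0) := by
    have hmul := tendsto_one_div_atTop_nhds_zero_nat.mul t3
    rw [zero_mul] at hmul
    apply hmul.congr'
    filter_upwards [Filter.eventually_ge_atTop 1] with s hs
    have hs0 : (s : ℝ) ≠ 0 := (Nat.cast_pos.mpr hs).ne'
    field_simp
  have hbn : b n = 0 := tendsto_nhds_unique t2 t4
  have t5 : Filter.Tendsto (fun s : ℕ => (s : ℝ) * (((n : ℝ) + 1) ^ s * L2 s))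
      Filter.atTop (nhds 0) := by
    have tg : Filter.Tendsto (fun s : ℕ => Eb * ((s : ℝ) * q ^ s)) Filter.atTop (nhds 0) := by
      simpa using (tendsto_self_mul_const_pow_of_lt_one hq0 hq1).const_mul Eb
    refine squeeze_zero_norm' ?_ tg
    filter_upwards [Filter.eventually_ge_atTop 2] with s hs
    have hb := hEb s hs
    rw [hbn, sub_zero] at hb
    calc ‖(s : ℝ) * (((n : ℝ) + 1) ^ s * L2 s)‖
        = (s : ℝ) * |((n : ℝ) + 1) ^ s * L2 s| := by
          rw [Real.norm_eq_abs, abs_mul, abs_of_nonneg (Nat.cast_nonneg s)]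
      _ ≤ (s : ℝ) * (Eb * q ^ s) := mul_le_mul_of_nonneg_left hb (Nat.cast_nonneg s)
      _ = Eb * ((s : ℝ) * q ^ s) := by ring
  have han : a n = 0 := by
    have hu := tendsto_nhds_unique t3 t5
    linarith
  exact ⟨han, hbn⟩


end
end
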